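/- Let T > 0, τ > 0 with T/τ ≥ 4, and let N ≥ 1 photons have arrival times t_1, …, t_N that are independent and uniformly distributed on [0, T]. Then the probability that photon 1 survives equals (2/T) ∫₀^τ (1 − (t + τ)/T)^{N−1} dt + ((T − 2τ)/T)(1 − 2τ/T)^{N−1}, which equals [2(1 − τ/T)^N + (N − 2)(1 − 2τ/T)^N] / N. -/

import Mathlib

open MeasureTheory

/-- The uniform probability measure on `[0, T]`. -/
noncomputable def unifIcc (T : ℝ) : Measure ℝ :=
  (ENNReal.ofReal T)⁻¹ • volume.restrict (Set.Icc 0 T)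

noncomputable def gfun (T τ x : ℝ) : ℝ := max (x - τ) 0 + max (T - x - τ) 0

lemma gfun_nonneg (T τ x : ℝ) : 0 ≤ gfun T τ x := by
  unfold gfun; positivity

lemma continuous_gfun (T τ : ℝ) : Continuous (gfun T τ) := by
  unfold gfun; fun_prop

lemma slab_meas (τ x : ℝ) : MeasurableSet {y : ℝ | τ ≤ |x - y|} := by
  apply measurableSet_le <;> fun_prop

lemma ofReal_max_zero (a : ℝ) : ENNReal.ofReal (max a 0) = ENNReal.ofReal a := by
  rcases le_total a 0 with h | h
  · simp [max_eq_right h, ENNReal.ofReal_eq_zero.2 h]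
  · rw [max_eq_left h]

lemma unif_slab (T τ x : ℝ) (hT : 0 < T) (hτ : 0 < τ) (hx : x ∈ Set.Icc 0 T) :
    unifIcc T {y : ℝ | τ ≤ |x - y|} =
      (ENNReal.ofReal T)⁻¹ * ENNReal.ofReal (gfun T τ x) := by
  obtain ⟨hx0, hxT⟩ := hx
  have hset : {y : ℝ | τ ≤ |x - y|} ∩ Set.Icc 0 T
      = Set.Icc 0 (x - τ) ∪ Set.Icc (x + τ) T := by
    ext y
    simp only [Set.mem_inter_iff, Set.mem_setOf_eq, Set.mem_Icc, Set.mem_union,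
      le_abs, neg_sub]
    constructor
    · rintro ⟨h1 | h1, h2, h3⟩
      · left; constructor <;> linarith
      · right; constructor <;> linarith
    · rintro (⟨h1, h2⟩ | ⟨h1, h2⟩)
      · exact ⟨Or.inl (by linarith), h1, by linarith⟩
      · exact ⟨Or.inr (by linarith), by linarith, h2⟩
  have hdisj : Disjoint (Set.Icc 0 (x - τ)) (Set.Icc (x + τ) T) := by
    rw [Set.disjoint_left]
    rintro y ⟨h1, h2⟩ ⟨h3, h4⟩
    linarith
  rw [unifIcc, Measure.smul_apply, Measure.restrict_apply (slab_meas τ x), hset,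
    measure_union hdisj measurableSet_Icc, Real.volume_Icc, Real.volume_Icc, smul_eq_mul]
  congr 1
  rw [sub_zero, gfun,
    ENNReal.ofReal_add (le_max_right _ _) (le_max_right _ _),
    ofReal_max_zero, ofReal_max_zero]
  congr 1
  ring

lemma unifIcc_prob (T : ℝ) (hT : 0 < T) : IsProbabilityMeasure (unifIcc T) := by
  constructor
  rw [unifIcc, Measure.smul_apply, Measure.restrict_apply MeasurableSet.univ,
    Set.univ_inter, Real.volume_Icc, sub_zero, smul_eq_mul,
    ENNReal.inv_mul_cancel (by simp [hT]) ENNReal.ofReal_ne_top]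

lemma measure_eq (T τ : ℝ) (hT : 0 < T) (hτ : 0 < τ) (n : ℕ) :
    ((Measure.pi fun _ : Fin (n + 1) => unifIcc T)
        {t : Fin (n + 1) → ℝ | ∀ j, j ≠ 0 → τ ≤ |t 0 - t j|})
    = (ENNReal.ofReal T)⁻¹ ^ (n + 1)
        * ∫⁻ x in Set.Icc 0 T, ENNReal.ofReal (gfun T τ x ^ n) := by
  have := unifIcc_prob T hT
  set A : Set (ℝ × (Fin n → ℝ)) := {p | ∀ j, τ ≤ |p.1 - p.2 j|} with hA_def
  have hA : MeasurableSet A := by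
    have : A = ⋂ j : Fin n, {p : ℝ × (Fin n → ℝ) | τ ≤ |p.1 - p.2 j|} := by
      ext p; simp [hA_def]
    rw [this]
    refine MeasurableSet.iInter fun j => measurableSet_le measurable_const ?_
    exact ((measurable_fst (α := ℝ) (β := Fin n → ℝ)).sub
      ((measurable_pi_apply j).comp measurable_snd)).abs
  have hpre : {t : Fin (n + 1) → ℝ | ∀ j, j ≠ 0 → τ ≤ |t 0 - t j|}
      = (MeasurableEquiv.piFinSuccAbove (fun _ : Fin (n + 1) => ℝ) 0) ⁻¹' A := by
    ext t
    simp only [Set.mem_preimage, Set.mem_setOf_eq, hA_def,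
      MeasurableEquiv.piFinSuccAbove_apply, Fin.removeNth, Fin.zero_succAbove]
    constructor
    · intro h j; exact h j.succ (Fin.succ_ne_zero j)
    · intro h j hj
      obtain ⟨k, rfl⟩ := Fin.exists_succ_eq.2 hj
      exact h k
  rw [hpre,
    (measurePreserving_piFinSuccAbove (fun _ : Fin (n + 1) => unifIcc T) 0).measure_preimage
      hA.nullMeasurableSet,
    Measure.prod_apply hA]
  have hmk : ∀ x ∈ Set.Icc (0:ℝ) T,
      (Measure.pi fun _ : Fin n => unifIcc T) (Prod.mk x ⁻¹' A)
        = (ENNReal.ofReal T)⁻¹ ^ n * ENNReal.ofReal (gfun T τ x ^ n) := by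
    intro x hx
    have : Prod.mk x ⁻¹' A = Set.pi Set.univ (fun _ : Fin n => {y : ℝ | τ ≤ |x - y|}) := by
      ext y; simp [hA_def, Set.mem_pi]
    rw [this, Measure.pi_pi, unif_slab T τ x hT hτ hx, Finset.prod_const]
    simp [mul_pow, ← ENNReal.ofReal_pow (gfun_nonneg T τ x)]
  have hae : ∀ᵐ x ∂(unifIcc T), x ∈ Set.Icc (0:ℝ) T := by
    rw [unifIcc]
    exact Measure.ae_smul_measure (ae_restrict_mem measurableSet_Icc) _
  have hcongr : ∫⁻ x, (Measure.pi fun _ : Fin n => unifIcc T) (Prod.mk x ⁻¹' A) ∂(unifIcc T)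
      = ∫⁻ x, (ENNReal.ofReal T)⁻¹ ^ n * ENNReal.ofReal (gfun T τ x ^ n) ∂(unifIcc T) := by
    apply lintegral_congr_ae
    filter_upwards [hae] with x hx using hmk x hx
  rw [hcongr, lintegral_const_mul' _ _
      (ENNReal.pow_ne_top (ENNReal.inv_ne_top.2 (by simp [hT]))),
    unifIcc, lintegral_smul_measure]
  ring

lemma split_integral (T τ : ℝ) (hτ : 0 < τ) (h4 : 4 * τ ≤ T) (n : ℕ) :
    ∫ x in (0:ℝ)..T, gfun T τ x ^ n
      = 2 * (((T - τ) ^ (n+1) - (T - 2*τ) ^ (n+1)) / (n+1)) + (T - 2*τ) ^ (n+1) := by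
  have hint : ∀ a b : ℝ, IntervalIntegrable (fun x => gfun T τ x ^ n) volume a b :=
    fun a b => ((continuous_gfun T τ).pow n).intervalIntegrable a b
  have e1 : ∫ x in (0:ℝ)..τ, gfun T τ x ^ n
      = ((T - τ) ^ (n+1) - (T - 2*τ) ^ (n+1)) / (n+1) := by
    rw [intervalIntegral.integral_congr (g := fun x => (T - τ - x) ^ n) ?_]
    · rw [intervalIntegral.integral_comp_sub_left (fun y => y ^ n) (T - τ), integral_pow]
      ring_nf
    · intro x hx
      rw [Set.uIcc_of_le hτ.le, Set.mem_Icc] at hx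
      simp only [gfun]
      rw [max_eq_right (by linarith), max_eq_left (by linarith)]
      ring_nf
  have e2 : ∫ x in τ..(T - τ), gfun T τ x ^ n = (T - 2*τ) ^ (n+1) := by
    rw [intervalIntegral.integral_congr (g := fun _ => (T - 2*τ) ^ n) ?_]
    · rw [intervalIntegral.integral_const, smul_eq_mul,
        show T - τ - τ = T - 2*τ by ring, ← pow_succ']
    · intro x hx
      rw [Set.uIcc_of_le (by linarith), Set.mem_Icc] at hx
      simp only [gfun]
      rw [max_eq_left (by linarith), max_eq_left (by linarith)]
      ring_nf
  have e3 : ∫ x in (T - τ)..T, gfun T τ x ^ n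
      = ((T - τ) ^ (n+1) - (T - 2*τ) ^ (n+1)) / (n+1) := by
    rw [intervalIntegral.integral_congr (g := fun x => (x - τ) ^ n) ?_]
    · rw [intervalIntegral.integral_comp_sub_right (fun y => y ^ n) τ, integral_pow]
      ring_nf
    · intro x hx
      rw [Set.uIcc_of_le (by linarith), Set.mem_Icc] at hx
      simp only [gfun]
      rw [max_eq_left (by linarith), max_eq_right (by linarith)]
      ring_nf
  rw [← intervalIntegral.integral_add_adjacent_intervals (b := τ) (hint 0 τ) (hint τ T),
    ← intervalIntegral.integral_add_adjacent_intervals (a := τ) (b := T - τ) (hint τ (T-τ))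
      (hint (T-τ) T), e1, e2, e3]
  ring

lemma toReal_measure (T τ : ℝ) (hT : 0 < T) (hτ : 0 < τ) (h4 : 4 * τ ≤ T) (n : ℕ) :
    ((Measure.pi fun _ : Fin (n + 1) => unifIcc T)
        {t : Fin (n + 1) → ℝ | ∀ j, j ≠ 0 → τ ≤ |t 0 - t j|}).toReal
    = T⁻¹ ^ (n + 1)
        * (2 * (((T - τ) ^ (n+1) - (T - 2*τ) ^ (n+1)) / (n+1)) + (T - 2*τ) ^ (n+1)) := by
  rw [measure_eq T τ hT hτ n]
  have hlin : ∫⁻ x in Set.Icc (0:ℝ) T, ENNReal.ofReal (gfun T τ x ^ n)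
      = ENNReal.ofReal (∫ x in Set.Icc (0:ℝ) T, gfun T τ x ^ n) := by
    rw [ofReal_integral_eq_lintegral_ofReal]
    · exact ((continuous_gfun T τ).pow n).integrableOn_Icc
    · exact Filter.Eventually.of_forall fun x => pow_nonneg (gfun_nonneg T τ x) n
  rw [hlin, ENNReal.toReal_mul, ENNReal.toReal_pow, ENNReal.toReal_inv,
    ENNReal.toReal_ofReal hT.le,
    ENNReal.toReal_ofReal (setIntegral_nonneg measurableSet_Icc
      fun x _ => pow_nonneg (gfun_nonneg T τ x) n)]
  congr 1
  rw [MeasureTheory.integral_Icc_eq_integral_Ioc,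
    ← intervalIntegral.integral_of_le hT.le]
  exact split_integral T τ hτ h4 n

/-- For `T/τ ≥ 4` and `N ≥ 1` photons with i.i.d. uniform
arrival times on `[0, T]`, the probability that photon `1` survives (no other
photon within `τ` of it) equals
`(2/T) ∫₀^τ (1 − (t + τ)/T)^{N−1} dt + ((T − 2τ)/T)(1 − 2τ/T)^{N−1}`, which
equals `(2(1 − τ/T)^N + (N − 2)(1 − 2τ/T)^N) / N`. -/
theorem survival_probability_first_photon (T τ : ℝ) (hT : 0 < T) (hτ : 0 < τ)
    (hratio : 4 ≤ T / τ) (N : ℕ) (hN : 1 ≤ N) :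
    ((Measure.pi fun _ : Fin N => unifIcc T)
        {t : Fin N → ℝ | ∀ j : Fin N, j ≠ ⟨0, hN⟩ → τ ≤ |t ⟨0, hN⟩ - t j|}).toReal =
      (2 / T) * (∫ t in (0 : ℝ)..τ, (1 - (t + τ) / T) ^ (N - 1))
        + ((T - 2 * τ) / T) * (1 - 2 * τ / T) ^ (N - 1) ∧
    (2 / T) * (∫ t in (0 : ℝ)..τ, (1 - (t + τ) / T) ^ (N - 1))
        + ((T - 2 * τ) / T) * (1 - 2 * τ / T) ^ (N - 1) =
      (2 * (1 - τ / T) ^ N + ((N : ℝ) - 2) * (1 - 2 * τ / T) ^ N) / N := by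
  have h4 : 4 * τ ≤ T := by
    rw [le_div_iff₀ hτ] at hratio
    linarith
  obtain ⟨n, rfl⟩ : ∃ n, N = n + 1 := ⟨N - 1, (Nat.succ_pred_eq_of_pos hN).symm⟩
  have hzero : (⟨0, hN⟩ : Fin (n + 1)) = 0 := rfl
  have hn1 : ((n : ℝ) + 1) ≠ 0 := by positivity
  have hT' : T ≠ 0 := hT.ne'
  -- value of the integral in the statement
  have hJ : (∫ t in (0 : ℝ)..τ, (1 - (t + τ) / T) ^ (n + 1 - 1))
      = (1/T) ^ n * (((T - τ) ^ (n+1) - (T - 2*τ) ^ (n+1)) / (n+1)) := by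
    have : (∫ t in (0 : ℝ)..τ, (1 - (t + τ) / T) ^ (n + 1 - 1))
        = ∫ t in (0 : ℝ)..τ, (1/T) ^ n * (T - τ - t) ^ n := by
      apply intervalIntegral.integral_congr
      intro t _
      simp only [← mul_pow, Nat.add_sub_cancel]
      congr 1
      field_simp
      ring
    rw [this, intervalIntegral.integral_const_mul,
      intervalIntegral.integral_comp_sub_left (fun y => y ^ n) (T - τ), integral_pow]
    ring_nf
  constructor
  · rw [hzero] at *
    rw [toReal_measure T τ hT hτ h4 n, hJ, Nat.add_sub_cancel,
      show 1 - 2 * τ / T = (T - 2 * τ) / T by field_simp]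
    simp only [div_pow, inv_pow]
    field_simp
    ring
  · rw [hJ]
    have e1 : 1 - τ / T = (T - τ) / T := by field_simp
    have e2 : 1 - 2 * τ / T = (T - 2 * τ) / T := by field_simp
    rw [e1, e2, Nat.add_sub_cancel]
    simp only [div_pow]
    push_cast
    field_simp
    ring
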